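/- (Combined prediction-step bound for Algorithm 2) Let x⁻_{k+1} = x_k − (|f(x_k,t_k) − f(x_k,t_{k−1})|/‖∇_x f(x_k,t_k)‖²)·∇_x f(x_k,t_k) if ‖∇_x f(x_k,t_k)‖ ≥ ε and x⁻_{k+1} = x_k otherwise, where t_{k−1} = t_k − δ. Then |f(x⁻_{k+1}, t_k + δ) − f(x_k, t_k)| ≤ max(γ'δ², μδ), where γ' = K3 + 2K1/δ + K1²M/ε² + K2(K1 + (δ/2)K3)/ε + δ²K3²M/(4ε²) and μ = K1 + (δ/2)K3. -/

import Mathlib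

open RealInnerProductSpace

private lemma lin_bound {F : Type*} [NormedAddCommGroup F] [NormedSpace ℝ F]
    {g g' : ℝ → F} {a b C : ℝ} (hab : a ≤ b)
    (hderiv : ∀ u ∈ Set.Icc a b, HasDerivAt g (g' u) u)
    (hbound : ∀ u ∈ Set.Icc a b, ‖g' u‖ ≤ C) :
    ‖g b - g a‖ ≤ C * (b - a) := by
  have := (convex_Icc a b).norm_image_sub_le_of_norm_hasDerivWithin_le
    (fun u hu => (hderiv u hu).hasDerivWithinAt) hbound
    (Set.left_mem_Icc.2 hab) (Set.right_mem_Icc.2 hab)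
  simpa [Real.norm_eq_abs, abs_of_nonneg (sub_nonneg.2 hab)] using this

private lemma quad_bound {g g' : ℝ → ℝ} {a b K : ℝ} (hab : a ≤ b)
    (hderiv : ∀ u ∈ Set.Icc a b, HasDerivAt g (g' u) u)
    (hbound : ∀ u ∈ Set.Icc a b, |g' u| ≤ K * (u - a)) :
    |g b - g a| ≤ K * (b - a) ^ 2 / 2 := by
  have key : ∀ σ : ℝ, |σ| = 1 → σ * (g b - g a) ≤ K * (b - a) ^ 2 / 2 := by
    intro σ hσ
    set φ : ℝ → ℝ := fun u => K * (u - a) ^ 2 / 2 - σ * g u with hφ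
    have hφd : ∀ u ∈ Set.Icc a b, HasDerivAt φ (K * (u - a) - σ * g' u) u := by
      intro u hu
      have h1 : HasDerivAt (fun u : ℝ => K * (u - a) ^ 2 / 2) (K * (u - a)) u := by
        have h0 : HasDerivAt (fun u : ℝ => (u - a) ^ 2) (2 * (u - a)) u := by
          simpa using (((hasDerivAt_id u).sub_const a).fun_pow 2)
        have : HasDerivAt (fun y => K / 2 * (y - a) ^ 2) (K / 2 * (2 * (u - a))) u := h0.const_mul (K / 2)
        convert this using 1
        · ext v; ring
        · ring
      exact h1.sub ((hderiv u hu).const_mul σ)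
    have hmono : MonotoneOn φ (Set.Icc a b) := by
      apply monotoneOn_of_deriv_nonneg (convex_Icc a b)
      · exact fun u hu => (hφd u hu).continuousAt.continuousWithinAt
      · intro u hu
        rw [interior_Icc] at hu
        exact ((hφd u (Set.Ioo_subset_Icc_self hu)).differentiableAt).differentiableWithinAt
      · intro u hu
        rw [interior_Icc] at hu
        rw [(hφd u (Set.Ioo_subset_Icc_self hu)).deriv]
        have h1 : σ * g' u ≤ |g' u| := by
          calc σ * g' u ≤ |σ * g' u| := le_abs_self _
            _ = |g' u| := by rw [abs_mul, hσ, one_mul]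
        have h2 := hbound u (Set.Ioo_subset_Icc_self hu)
        linarith
    have := hmono (Set.left_mem_Icc.2 hab) (Set.right_mem_Icc.2 hab) hab
    simp only [hφ, sub_self] at this
    nlinarith [this]
  refine abs_le.mpr ⟨?_, ?_⟩
  · have := key (-1) (by norm_num); linarith
  · have := key 1 (by norm_num); linarith

private lemma descent_bound {E : Type*} [NormedAddCommGroup E] [InnerProductSpace ℝ E]
    [CompleteSpace E] {φ : E → ℝ} {g : E → E} {M : ℝ}
    (hgrad : ∀ x, HasGradientAt φ (g x) x)
    (hLip : ∀ x y, ‖g x - g y‖ ≤ M * ‖x - y‖) (x y : E) :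
    |φ y - φ x - ⟪g x, y - x⟫| ≤ M / 2 * ‖y - x‖ ^ 2 := by
  set v := y - x with hv
  set ψ : ℝ → ℝ := fun u => φ (x + u • v) - u * ⟪g x, v⟫ with hψ
  have hψd : ∀ u ∈ Set.Icc (0:ℝ) 1,
      HasDerivAt ψ (⟪g (x + u • v), v⟫ - ⟪g x, v⟫) u := by
    intro u _
    have hline : HasDerivAt (fun u : ℝ => x + u • v) v u := by
      simpa using (((hasDerivAt_id u).smul_const v).const_add x)
    have hcomp : HasDerivAt (fun u : ℝ => φ (x + u • v)) ⟪g (x + u • v), v⟫ u := by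
      have hf := (hgrad (x + u • v)).hasFDerivAt
      have := hf.comp_hasDerivAt u hline
      simpa [InnerProductSpace.toDual_apply_apply, Function.comp_def] using this
    have hlin : HasDerivAt (fun u : ℝ => u * ⟪g x, v⟫) ⟪g x, v⟫ u := by
      simpa using (hasDerivAt_id u).mul_const (⟪g x, v⟫ : ℝ)
    exact hcomp.sub hlin
  have hb : ∀ u ∈ Set.Icc (0:ℝ) 1,
      |⟪g (x + u • v), v⟫ - ⟪g x, v⟫| ≤ (M * ‖v‖ ^ 2) * (u - 0) := by
    intro u hu
    rw [← inner_sub_left]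
    calc |⟪g (x + u • v) - g x, v⟫| ≤ ‖g (x + u • v) - g x‖ * ‖v‖ :=
          abs_real_inner_le_norm _ _
      _ ≤ (M * ‖x + u • v - x‖) * ‖v‖ :=
          mul_le_mul_of_nonneg_right (hLip _ _) (norm_nonneg _)
      _ = (M * ‖v‖ ^ 2) * (u - 0) := by
          have : ‖x + u • v - x‖ = u * ‖v‖ := by
            simp [norm_smul, abs_of_nonneg hu.1]
          rw [this]; ring
  have := quad_bound (by norm_num : (0:ℝ) ≤ 1) hψd hb
  have h10 : ψ 1 - ψ 0 = φ y - φ x - ⟪g x, v⟫ := by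
    simp only [hψ, hv, one_smul, zero_smul, add_zero, zero_mul, sub_zero]
    rw [add_sub_cancel]
    ring
  rw [h10] at this
  calc |φ y - φ x - ⟪g x, y - x⟫| ≤ (M * ‖v‖ ^ 2) * (1 - 0) ^ 2 / 2 := this
    _ = M / 2 * ‖y - x‖ ^ 2 := by rw [hv]; ring

private lemma final_algebra (K1 K2 K3 M m ε δ Δ : ℝ) (hεne : ε ≠ 0) (hδne : δ ≠ 0)
    (hε : 0 < ε) (hδ : 0 < δ) (hm : 0 < m) (hM : 0 < M)
    (hK1' : 0 ≤ K1) (hK2' : 0 ≤ K2) (hK3' : 0 ≤ K3) (hΔ0 : 0 ≤ Δ)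
    (hΔμ : Δ ≤ (K1 + δ / 2 * K3) * δ) :
    M / 2 * (Δ / ε) ^ 2 + Δ / ε * (K2 * δ) + (K3 * δ ^ 2 + 2 * (K1 * δ))
      ≤ (K3 + 2 * K1 / δ + K1 ^ 2 * M / ε ^ 2 + K2 * (K1 + δ / 2 * K3) / ε
            + δ ^ 2 * K3 ^ 2 * M / (4 * ε ^ 2)) * δ ^ 2 := by
  have hrhs : ε ^ 2 * ((K3 + 2 * K1 / δ + K1 ^ 2 * M / ε ^ 2 + K2 * (K1 + δ / 2 * K3) / ε
            + δ ^ 2 * K3 ^ 2 * M / (4 * ε ^ 2)) * δ ^ 2)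
        = ε ^ 2 * K3 * δ ^ 2 + 2 * K1 * δ * ε ^ 2 + K1 ^ 2 * M * δ ^ 2
          + ε * K2 * (K1 + δ / 2 * K3) * δ ^ 2 + δ ^ 4 * K3 ^ 2 * M / 4 := by
    field_simp
  have key : M / 2 * Δ ^ 2 + ε * (Δ * (K2 * δ)) + ε ^ 2 * (K3 * δ ^ 2 + 2 * (K1 * δ))
      ≤ ε ^ 2 * ((K3 + 2 * K1 / δ + K1 ^ 2 * M / ε ^ 2 + K2 * (K1 + δ / 2 * K3) / ε
          + δ ^ 2 * K3 ^ 2 * M / (4 * ε ^ 2)) * δ ^ 2) := by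
    rw [hrhs]
    nlinarith [mul_le_mul_of_nonneg_left (mul_self_le_mul_self hΔ0 hΔμ)
        (by positivity : (0:ℝ) ≤ M / 2),
      mul_nonneg (mul_nonneg hM.le (sq_nonneg δ)) (sq_nonneg (K1 - δ / 2 * K3)),
      mul_le_mul_of_nonneg_left hΔμ (by positivity : (0:ℝ) ≤ ε * K2 * δ),
      hΔ0, hε.le, hδ.le, hK1', hK2', hK3', hM.le]
  calc M / 2 * (Δ / ε) ^ 2 + Δ / ε * (K2 * δ) + (K3 * δ ^ 2 + 2 * (K1 * δ))
      = (M / 2 * Δ ^ 2 + ε * (Δ * (K2 * δ)) + ε ^ 2 * (K3 * δ ^ 2 + 2 * (K1 * δ))) / ε ^ 2 := by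
        field_simp
    _ ≤ ε ^ 2 * ((K3 + 2 * K1 / δ + K1 ^ 2 * M / ε ^ 2 + K2 * (K1 + δ / 2 * K3) / ε
          + δ ^ 2 * K3 ^ 2 * M / (4 * ε ^ 2)) * δ ^ 2) / ε ^ 2 := by
        exact (div_le_div_iff_of_pos_right (by positivity : (0:ℝ) < ε ^ 2)).2 key
    _ = (K3 + 2 * K1 / δ + K1 ^ 2 * M / ε ^ 2 + K2 * (K1 + δ / 2 * K3) / ε
          + δ ^ 2 * K3 ^ 2 * M / (4 * ε ^ 2)) * δ ^ 2 := by
        field_simp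

set_option maxHeartbeats 1000000

/-- combined prediction-step bound for Algorithm 2: with the
prediction `x⁻ = x_k − (|f(x_k,t_k) − f(x_k,t_k−δ)|/‖∇_x f(x_k,t_k)‖²)∇_x f(x_k,t_k)`
if `‖∇_x f(x_k,t_k)‖ ≥ ε` and `x⁻ = x_k` otherwise,
`|f(x⁻, t_k + δ) − f(x_k, t_k)| ≤ max(γ'δ², μδ)` with
`γ' = K3 + 2K1/δ + K1²M/ε² + K2(K1 + (δ/2)K3)/ε + δ²K3²M/(4ε²)` and
`μ = K1 + (δ/2)K3`. -/
theorem alg2_prediction_step_bound_combined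
    {E : Type*} [NormedAddCommGroup E] [InnerProductSpace ℝ E] [CompleteSpace E]
    (f : E → ℝ → ℝ) (gx : E → ℝ → E) (ft : E → ℝ → ℝ)
    (fxt : E → ℝ → E) (ftt : E → ℝ → ℝ)
    (m M K1 K2 K3 : ℝ) (hm : 0 < m) (hmM : m ≤ M)
    (hgrad : ∀ (x : E) (t : ℝ), 0 ≤ t → HasGradientAt (fun y => f y t) (gx x t) x)
    (hft : ∀ (x : E) (t : ℝ), 0 ≤ t → HasDerivAt (fun s => f x s) (ft x t) t)
    (hfxt : ∀ (x : E) (t : ℝ), 0 ≤ t → HasDerivAt (fun s => gx x s) (fxt x t) t)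
    (hftt : ∀ (x : E) (t : ℝ), 0 ≤ t → HasDerivAt (fun s => ft x s) (ftt x t) t)
    (hsc : ∀ (t : ℝ), 0 ≤ t → ∀ x y : E, m * ‖x - y‖ ^ 2 ≤ ⟪gx x t - gx y t, x - y⟫)
    (hLip : ∀ (t : ℝ), 0 ≤ t → ∀ x y : E, ‖gx x t - gx y t‖ ≤ M * ‖x - y‖)
    (hK1 : ∀ (x : E) (t : ℝ), 0 ≤ t → |ft x t| ≤ K1)
    (hK2 : ∀ (x : E) (t : ℝ), 0 ≤ t → ‖fxt x t‖ ≤ K2)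
    (hK3 : ∀ (x : E) (t : ℝ), 0 ≤ t → |ftt x t| ≤ K3)
    (xk : E) (tk δ ε : ℝ) (hδ : 0 < δ) (hδtk : δ ≤ tk) (hε : 0 < ε)
    (xminus : E)
    (hxminus : xminus =
      if ε ≤ ‖gx xk tk‖ then
        xk - (|f xk tk - f xk (tk - δ)| / ‖gx xk tk‖ ^ 2) • gx xk tk
      else xk) :
    |f xminus (tk + δ) - f xk tk| ≤
      max ((K3 + 2 * K1 / δ + K1 ^ 2 * M / ε ^ 2 + K2 * (K1 + δ / 2 * K3) / ε
              + δ ^ 2 * K3 ^ 2 * M / (4 * ε ^ 2)) * δ ^ 2)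
        ((K1 + δ / 2 * K3) * δ) := by
  have htk0 : (0:ℝ) ≤ tk := le_trans hδ.le hδtk
  have htkm : (0:ℝ) ≤ tk - δ := sub_nonneg.2 hδtk
  have htkp : (0:ℝ) ≤ tk + δ := by linarith
  have hK1' : 0 ≤ K1 := le_trans (abs_nonneg _) (hK1 xk tk htk0)
  have hK2' : 0 ≤ K2 := le_trans (norm_nonneg _) (hK2 xk tk htk0)
  have hK3' : 0 ≤ K3 := le_trans (abs_nonneg _) (hK3 xk tk htk0)
  have hM : 0 < M := lt_of_lt_of_le hm hmM
  have timeLip : ∀ (x : E) (a b : ℝ), 0 ≤ a → a ≤ b → |f x b - f x a| ≤ K1 * (b - a) := by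
    intro x a b ha hab
    have := lin_bound (g := fun s => f x s) (g' := fun s => ft x s) hab
      (fun u hu => hft x u (le_trans ha hu.1)) (fun u hu => hK1 x u (le_trans ha hu.1))
    simpa using this
  have ftLip : ∀ (x : E) (a b : ℝ), 0 ≤ a → a ≤ b → |ft x b - ft x a| ≤ K3 * (b - a) := by
    intro x a b ha hab
    have := lin_bound (g := fun s => ft x s) (g' := fun s => ftt x s) hab
      (fun u hu => hftt x u (le_trans ha hu.1)) (fun u hu => hK3 x u (le_trans ha hu.1))
    simpa using this
  by_cases hcase : ε ≤ ‖gx xk tk‖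
  · -- prediction step taken
    have hG : 0 < ‖gx xk tk‖ := lt_of_lt_of_le hε hcase
    have hGne : ‖gx xk tk‖ ≠ 0 := ne_of_gt hG
    set D := f xk tk - f xk (tk - δ) with hDdef
    set Δ := |D| with hΔdef
    have hΔ0 : 0 ≤ Δ := abs_nonneg _
    set s := Δ / ‖gx xk tk‖ ^ 2 with hsdef
    have hs0 : 0 ≤ s := div_nonneg hΔ0 (sq_nonneg _)
    clear_value s
    clear_value Δ
    clear_value D
    have hxm : xminus = xk - s • gx xk tk := by rw [hxminus, if_pos hcase]
    -- Taylor forward at tk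
    have F1 : |f xk (tk + δ) - f xk tk - δ * ft xk tk| ≤ K3 * δ ^ 2 / 2 := by
      have hq := quad_bound (a := tk) (b := tk + δ)
        (g := fun u => f xk u - u * ft xk tk)
        (g' := fun u => ft xk u - ft xk tk) (by linarith)
        (fun u hu => by
          have h2 : HasDerivAt (fun u : ℝ => u * ft xk tk) (ft xk tk) u := by
            simpa using (hasDerivAt_id u).mul_const (ft xk tk)
          exact (hft xk u (le_trans htk0 hu.1)).sub h2)
        (fun u hu => ftLip xk tk u htk0 hu.1)
      calc |f xk (tk + δ) - f xk tk - δ * ft xk tk|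
          = |(f xk (tk + δ) - (tk + δ) * ft xk tk) - (f xk tk - tk * ft xk tk)| := by
            congr 1; ring
        _ ≤ K3 * ((tk + δ) - tk) ^ 2 / 2 := hq
        _ = K3 * δ ^ 2 / 2 := by ring
    -- Taylor backward at tk
    have F2 : |D - δ * ft xk tk| ≤ K3 * δ ^ 2 / 2 := by
      have hq := quad_bound (a := (0:ℝ)) (b := δ)
        (g := fun u => f xk (tk - u) + u * ft xk tk)
        (g' := fun u => ft xk tk - ft xk (tk - u)) hδ.le
        (fun u hu => by
          have hin : HasDerivAt (fun u : ℝ => tk - u) (-1) u := by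
            simpa using (hasDerivAt_id u).const_sub tk
          have h0 : 0 ≤ tk - u := by have := hu.2; linarith
          have h1 := (hft xk (tk - u) h0).comp u hin
          have h2 : HasDerivAt (fun u : ℝ => u * ft xk tk) (ft xk tk) u := by
            simpa using (hasDerivAt_id u).mul_const (ft xk tk)
          have : HasDerivAt (fun u => f xk (tk - u) + u * ft xk tk) (ft xk (tk - u) * -1 + ft xk tk) u := h1.add h2
          convert this using 1
          ring)
        (fun u hu => by
          have h0 : 0 ≤ tk - u := by have := hu.2; linarith
          have := ftLip xk (tk - u) tk h0 (by have := hu.1; linarith)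
          calc |ft xk tk - ft xk (tk - u)| ≤ K3 * (tk - (tk - u)) := this
            _ = K3 * (u - 0) := by ring)
      calc |D - δ * ft xk tk|
          = |(f xk (tk - δ) + δ * ft xk tk) - (f xk (tk - 0) + 0 * ft xk tk)| := by
            rw [hDdef]; rw [abs_sub_comm]; congr 1; ring
        _ ≤ K3 * (δ - 0) ^ 2 / 2 := hq
        _ = K3 * δ ^ 2 / 2 := by ring
    have F3 : Δ ≤ K1 * δ := by
      have := timeLip xk (tk - δ) tk htkm (by linarith)
      rw [hΔdef, hDdef]
      calc |f xk tk - f xk (tk - δ)| ≤ K1 * (tk - (tk - δ)) := this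
        _ = K1 * δ := by ring
    have F5 : ‖gx xk (tk + δ) - gx xk tk‖ ≤ K2 * δ := by
      have := lin_bound (g := fun u => gx xk u) (g' := fun u => fxt xk u)
        (by linarith : tk ≤ tk + δ)
        (fun u hu => hfxt xk u (le_trans htk0 hu.1)) (fun u hu => hK2 xk u (le_trans htk0 hu.1))
      calc ‖gx xk (tk + δ) - gx xk tk‖ ≤ K2 * ((tk + δ) - tk) := this
        _ = K2 * δ := by ring
    have F6 : |f xminus (tk + δ) - f xk (tk + δ) - ⟪gx xk (tk + δ), xminus - xk⟫|
        ≤ M / 2 * ‖xminus - xk‖ ^ 2 := by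
      exact descent_bound (fun y => hgrad y (tk + δ) htkp)
        (fun a b => hLip (tk + δ) htkp a b) xk xminus
    have hnorm : ‖xminus - xk‖ = Δ / ‖gx xk tk‖ := by
      rw [hxm, sub_sub_cancel_left, norm_neg, norm_smul, Real.norm_eq_abs,
        abs_of_nonneg hs0, hsdef]
      field_simp
    have hnormε : ‖xminus - xk‖ ≤ Δ / ε := by
      rw [hnorm]
      gcongr
    have hinner : ⟪gx xk (tk + δ), xminus - xk⟫
        = -Δ - s * ⟪gx xk (tk + δ) - gx xk tk, gx xk tk⟫ := by
      rw [hxm, sub_sub_cancel_left, inner_neg_right, real_inner_smul_right]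
      have h2 : ⟪gx xk (tk + δ), gx xk tk⟫
          = ⟪gx xk (tk + δ) - gx xk tk, gx xk tk⟫ + ‖gx xk tk‖ ^ 2 := by
        rw [inner_sub_left, real_inner_self_eq_norm_sq]; ring
      rw [h2, mul_add]
      have h3 : s * ‖gx xk tk‖ ^ 2 = Δ := by
        rw [hsdef]; field_simp
      rw [h3]; ring
    have hdecomp : f xminus (tk + δ) - f xk tk
        = (f xminus (tk + δ) - f xk (tk + δ) - ⟪gx xk (tk + δ), xminus - xk⟫)
          + (f xk (tk + δ) - f xk tk - Δ)
          + (-(s * ⟪gx xk (tk + δ) - gx xk tk, gx xk tk⟫)) := by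
      linear_combination hinner
    -- bound on middle term
    have hXD : |f xk (tk + δ) - f xk tk - D| ≤ K3 * δ ^ 2 := by
      have h := abs_sub_le (f xk (tk + δ) - f xk tk) (δ * ft xk tk) D
      rw [abs_sub_comm (δ * ft xk tk) D] at h
      linarith [F1, F2]
    have hB : |f xk (tk + δ) - f xk tk - Δ| ≤ K3 * δ ^ 2 + 2 * (K1 * δ) := by
      rcases abs_cases D with ⟨h, _⟩ | ⟨h, _⟩
      · rw [hΔdef, h]; linarith [hXD]
      · rw [hΔdef, h]
        have heq : f xk (tk + δ) - f xk tk - -D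
            = (f xk (tk + δ) - f xk tk - D) + 2 * D := by ring
        rw [heq]
        have h2 : |2 * D| = 2 * Δ := by rw [abs_mul, ← hΔdef]; norm_num
        have := abs_add_le (f xk (tk + δ) - f xk tk - D) (2 * D)
        rw [h2] at this
        linarith [hXD, F3]
    -- bound on last term
    have hC : s * |⟪gx xk (tk + δ) - gx xk tk, gx xk tk⟫| ≤ Δ / ε * (K2 * δ) := by
      have hCS : |⟪gx xk (tk + δ) - gx xk tk, gx xk tk⟫|
          ≤ ‖gx xk (tk + δ) - gx xk tk‖ * ‖gx xk tk‖ := abs_real_inner_le_norm _ _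
      have h1 : s * |⟪gx xk (tk + δ) - gx xk tk, gx xk tk⟫|
          ≤ s * ((K2 * δ) * ‖gx xk tk‖) := by
        refine mul_le_mul_of_nonneg_left (le_trans hCS ?_) hs0
        exact mul_le_mul_of_nonneg_right F5 (norm_nonneg _)
      have h2 : s * ((K2 * δ) * ‖gx xk tk‖) = Δ / ‖gx xk tk‖ * (K2 * δ) := by
        rw [hsdef]; field_simp
      rw [h2] at h1
      refine le_trans h1 ?_
      have : Δ / ‖gx xk tk‖ ≤ Δ / ε := by gcongr
      exact mul_le_mul_of_nonneg_right this (by positivity)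
    -- assemble
    have habs : |f xminus (tk + δ) - f xk tk|
        ≤ M / 2 * (Δ / ε) ^ 2 + Δ / ε * (K2 * δ) + (K3 * δ ^ 2 + 2 * (K1 * δ)) := by
      rw [hdecomp]
      refine le_trans (abs_add_three _ _ _) ?_
      have hA : |f xminus (tk + δ) - f xk (tk + δ) - ⟪gx xk (tk + δ), xminus - xk⟫|
          ≤ M / 2 * (Δ / ε) ^ 2 := by
        refine le_trans F6 ?_
        have h2 : ‖xminus - xk‖ ^ 2 ≤ (Δ / ε) ^ 2 :=
          pow_le_pow_left₀ (norm_nonneg _) hnormε 2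
        exact mul_le_mul_of_nonneg_left h2 (by positivity)
      have hC' : |(-(s * ⟪gx xk (tk + δ) - gx xk tk, gx xk tk⟫))| ≤ Δ / ε * (K2 * δ) := by
        rw [abs_neg, abs_mul, abs_of_nonneg hs0]
        exact hC
      linarith [hA, hB, hC']
    have hΔμ : Δ ≤ (K1 + δ / 2 * K3) * δ := by
      have h1 : Δ - |δ * ft xk tk| ≤ |D - δ * ft xk tk| := by
        rw [hΔdef]; exact abs_sub_abs_le_abs_sub D (δ * ft xk tk)
      have h2 : |δ * ft xk tk| ≤ δ * K1 := by
        rw [abs_mul, abs_of_pos hδ]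
        exact mul_le_mul_of_nonneg_left (hK1 xk tk htk0) hδ.le
      have h3 : (K1 + δ / 2 * K3) * δ = δ * K1 + K3 * δ ^ 2 / 2 := by ring
      linarith [F2]
    refine le_trans habs (le_trans ?_ (le_max_left _ _))
    exact final_algebra K1 K2 K3 M m ε δ Δ (ne_of_gt hε) (ne_of_gt hδ) hε hδ hm hM
      hK1' hK2' hK3' hΔ0 hΔμ
  · -- no prediction step
    rw [hxminus, if_neg hcase]
    refine le_trans ?_ (le_max_right _ _)
    have h := timeLip xk tk (tk + δ) htk0 (by linarith)
    have h2 : K1 * (tk + δ - tk) = K1 * δ := by ring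
    have h3 : (K1 + δ / 2 * K3) * δ - K1 * δ = δ / 2 * K3 * δ := by ring
    have h4 : 0 ≤ δ / 2 * K3 * δ := by positivity
    linarith
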